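/- Let k ≥ 1 robots have maximum speed v_max > 0, and suppose at a search state there remain finitely many objects where object i requires total travel distance at least d_i ≥ 0 for whichever robot retrieves it (each object is retrieved by exactly one robot, and a robot covers distance at most v_max·τ in time τ). Then the heuristic value H = (Σ_i d_i) / (k · v_max) never exceeds the true remaining makespan: for any schedule completing all remaining retrievals with makespan M, one has H ≤ M. -/
import Mathlib

/-- Admissibility of the A* heuristic: with `k ≥ 1` robots of maximum speed
`vmax > 0`, if each remaining object `i` requires travel distance at least
`d i ≥ 0` from whichever robot retrieves it, then for any schedule (an
assignment `a` of each object to exactly one robot) completing all retrievals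
with makespan `M` — so each robot's total assigned distance is at most
`vmax · M` — the heuristic `H = (∑ i, d i) / (k · vmax)` satisfies `H ≤ M`. -/
theorem mrcr_heuristic_admissible {k : ℕ} (hk : 1 ≤ k) (vmax : ℝ)
    (hv : 0 < vmax) {ι : Type} [Fintype ι] (d : ι → ℝ) (hd : ∀ i, 0 ≤ d i)
    (a : ι → Fin k) (M : ℝ)
    (hM : ∀ j : Fin k,
      ∑ i ∈ Finset.univ.filter (fun i => a i = j), d i ≤ vmax * M) :
    (∑ i, d i) / (k * vmax) ≤ M := by
  have hkv : (0:ℝ) < k * vmax := by positivity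
  rw [div_le_iff₀ hkv]
  have hsplit : (∑ i, d i)
      = ∑ j : Fin k, ∑ i ∈ Finset.univ.filter (fun i => a i = j), d i := by
    rw [← Finset.sum_fiberwise_of_maps_to (g := a) (fun i _ => Finset.mem_univ (a i))]
  calc (∑ i, d i) = ∑ j : Fin k, ∑ i ∈ Finset.univ.filter (fun i => a i = j), d i := hsplit
    _ ≤ ∑ _j : Fin k, vmax * M := Finset.sum_le_sum (fun j _ => hM j)
    _ = k * (vmax * M) := by simp [mul_comm]
    _ = M * (k * vmax) := by ring
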